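/- arXiv:1904.04648 — 5 statements merged into one kernel-verified Lean document; each statement's English description precedes it below -/
import Mathlib

section
/- Let Λ > 0 and 0 < M < (1/3)√(2/Λ), and let q₁ < 0 < q₂ < q₃ be the three critical points of φ(q) = -Λq⁴ + 3q² - 6Mq. Then φ(q₁) > 0 and φ(q₂) < 0. -/
/-- For `Λ > 0`, `0 < M < (1/3)√(2/Λ)` and critical points `q₁ < 0 < q₂ < q₃` of
`φ(q) = -Λq⁴ + 3q² - 6Mq` (i.e. zeros of `φ'(q) = -4Λq³ + 6q - 6M`), one has
`φ(q₁) > 0` and `φ(q₂) < 0`. -/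
theorem aux_function_extrema_signs (Λ M q₁ q₂ q₃ : ℝ) (hΛ : 0 < Λ)
    (hM0 : 0 < M) (hM : M < (1 / 3) * Real.sqrt (2 / Λ))
    (h1 : q₁ < 0) (h2 : 0 < q₂) (h23 : q₂ < q₃)
    (hc1 : -4 * Λ * q₁ ^ 3 + 6 * q₁ - 6 * M = 0)
    (hc2 : -4 * Λ * q₂ ^ 3 + 6 * q₂ - 6 * M = 0)
    (hc3 : -4 * Λ * q₃ ^ 3 + 6 * q₃ - 6 * M = 0) :
    0 < -Λ * q₁ ^ 4 + 3 * q₁ ^ 2 - 6 * M * q₁ ∧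
    -Λ * q₂ ^ 4 + 3 * q₂ ^ 2 - 6 * M * q₂ < 0 := by
  -- At a critical point, φ(q) = (3/2) q (q - 3M).
  have hφ1 : -Λ * q₁ ^ 4 + 3 * q₁ ^ 2 - 6 * M * q₁ = 3 / 2 * q₁ * (q₁ - 3 * M) := by
    linear_combination (q₁ / 4) * hc1
  have hφ2 : -Λ * q₂ ^ 4 + 3 * q₂ ^ 2 - 6 * M * q₂ = 3 / 2 * q₂ * (q₂ - 3 * M) := by
    linear_combination (q₂ / 4) * hc2
  -- Subtracting the critical equations at q₂, q₃ and cancelling q₂ - q₃ ≠ 0: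
  have f23 : (q₂ - q₃) * (2 * Λ * (q₂ ^ 2 + q₂ * q₃ + q₃ ^ 2) - 3) = 0 := by
    linear_combination (1 / 2) * hc3 - (1 / 2) * hc2
  have hne : q₂ - q₃ ≠ 0 := by linarith
  have g23 : 2 * Λ * (q₂ ^ 2 + q₂ * q₃ + q₃ ^ 2) = 3 := by
    rcases mul_eq_zero.mp f23 with h | h
    · exact absurd h hne
    · linarith
  -- Hence Λ q₂² < 1/2, so 3M = q₂ (3 - 2Λ q₂²) > 2 q₂, in particular q₂ < 3M.
  have hΛq2 : Λ * q₂ ^ 2 < 1 / 2 := by nlinarith [sq_nonneg (q₂ - q₃), mul_pos h2 (h2.trans h23)]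
  have hq2 : q₂ < 3 * M := by nlinarith [mul_pos hΛ (mul_pos h2 (mul_pos h2 h2))]
  constructor
  · rw [hφ1]
    have : 3 / 2 * q₁ < 0 := by linarith
    exact mul_pos_of_neg_of_neg this (by linarith)
  · rw [hφ2]
    exact mul_neg_of_pos_of_neg (by linarith) (by linarith)
end

section
/- Let Λ > 0, M > 0, Q ≠ 0 with Υ := -1/(8Λ³) + 9M²/(16Λ²) < 0, and let q₂ < q₃ be the two positive critical points of φ(q) = -Λq⁴ + 3q² - 6Mq. If -φ(q₃) < 3Q² < -φ(q₂), then the equation φ(q) + 3Q² = 0 has exactly three distinct positive real roots. -/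
/-- Three horizons: for `Λ > 0`, `M > 0`, `Q ≠ 0` with `Υ < 0`, and the two positive
critical points `q₂ < q₃` of `φ(q) = -Λq⁴ + 3q² - 6Mq`, if `-φ(q₃) < 3Q² < -φ(q₂)`
then `φ(q) + 3Q² = 0` has exactly three distinct positive real roots. -/
theorem three_horizons (Λ M Q q₂ q₃ : ℝ) (hΛ : 0 < Λ) (hM : 0 < M) (hQ : Q ≠ 0)
    (hΥ : -1 / (8 * Λ ^ 3) + 9 * M ^ 2 / (16 * Λ ^ 2) < 0)
    (h2 : 0 < q₂) (h23 : q₂ < q₃)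
    (hc2 : -4 * Λ * q₂ ^ 3 + 6 * q₂ - 6 * M = 0)
    (hc3 : -4 * Λ * q₃ ^ 3 + 6 * q₃ - 6 * M = 0)
    (hlow : -(-Λ * q₃ ^ 4 + 3 * q₃ ^ 2 - 6 * M * q₃) < 3 * Q ^ 2)
    (hhigh : 3 * Q ^ 2 < -(-Λ * q₂ ^ 4 + 3 * q₂ ^ 2 - 6 * M * q₂)) :
    ∃ a b c : ℝ, 0 < a ∧ a < b ∧ b < c ∧
      ∀ q : ℝ, 0 < q →
        ((-Λ * q ^ 4 + 3 * q ^ 2 - 6 * M * q) + 3 * Q ^ 2 = 0 ↔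
          q = a ∨ q = b ∨ q = c) := by
  set f : ℝ → ℝ := fun q => -Λ * q ^ 4 + 3 * q ^ 2 - 6 * M * q + 3 * Q ^ 2 with hf
  -- derivative
  have hd : ∀ x : ℝ, HasDerivAt f (-(4 * Λ) * x ^ 3 + 6 * x - 6 * M) x := by
    intro x
    have h1 := ((((hasDerivAt_pow 4 x).const_mul (-Λ)).add
        ((hasDerivAt_pow 2 x).const_mul 3)).sub
        ((hasDerivAt_id' x).const_mul (6 * M))).add_const (3 * Q ^ 2)
    refine h1.congr_deriv ?_
    push_cast
    ring
  have hfc : Continuous f := by fun_prop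
  -- elementary symmetric identities
  have hne : q₂ ≠ q₃ := ne_of_lt h23
  have hA : 4 * Λ * (q₂ ^ 2 + q₂ * q₃ + q₃ ^ 2) = 6 := by
    have h : (q₂ - q₃) * (4 * Λ * (q₂ ^ 2 + q₂ * q₃ + q₃ ^ 2) - 6) = 0 := by
      linear_combination hc3 - hc2
    rcases mul_eq_zero.mp h with h | h
    · exact absurd (sub_eq_zero.mp h) hne
    · linarith
  have hB : 4 * Λ * (q₂ * q₃ * (q₂ + q₃)) = 6 * M := by
    have h : (q₂ - q₃) * (4 * Λ * (q₂ * q₃ * (q₂ + q₃)) - 6 * M) = 0 := by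
      linear_combination q₂ * hc3 - q₃ * hc2
    rcases mul_eq_zero.mp h with h | h
    · exact absurd (sub_eq_zero.mp h) hne
    · linarith
  have hfac : ∀ x : ℝ, -(4 * Λ) * x ^ 3 + 6 * x - 6 * M
      = -(4 * Λ) * ((x + q₂ + q₃) * ((x - q₂) * (x - q₃))) := by
    intro x
    linear_combination (-x) * hA + hB
  have h3 : 0 < q₃ := lt_trans h2 h23
  -- monotonicity pieces
  have hanti1 : StrictAntiOn f (Set.Icc 0 q₂) := by
    apply strictAntiOn_of_deriv_neg (convex_Icc 0 q₂) hfc.continuousOn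
    intro x hx
    rw [interior_Icc] at hx
    rw [(hd x).deriv, hfac x]
    have hx1 : 0 < x + q₂ + q₃ := by linarith [hx.1]
    have hx2 : x - q₂ < 0 := by linarith [hx.2]
    have hx3 : x - q₃ < 0 := by linarith [hx.2]
    nlinarith [mul_pos hΛ (mul_pos hx1 (mul_pos_of_neg_of_neg hx2 hx3))]
  have hmono : StrictMonoOn f (Set.Icc q₂ q₃) := by
    apply strictMonoOn_of_deriv_pos (convex_Icc q₂ q₃) hfc.continuousOn
    intro x hx
    rw [interior_Icc] at hx
    rw [(hd x).deriv, hfac x]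
    have hx1 : 0 < x + q₂ + q₃ := by linarith [hx.1]
    have hx2 : 0 < x - q₂ := by linarith [hx.1]
    have hx3 : x - q₃ < 0 := by linarith [hx.2]
    nlinarith [mul_pos hΛ (mul_pos hx1 (mul_pos hx2 (by linarith : (0:ℝ) < q₃ - x)))]
  have hanti2 : StrictAntiOn f (Set.Ici q₃) := by
    apply strictAntiOn_of_deriv_neg (convex_Ici q₃) hfc.continuousOn
    intro x hx
    rw [interior_Ici] at hx
    rw [(hd x).deriv, hfac x]
    have hx1 : 0 < x + q₂ + q₃ := by linarith [Set.mem_Ioi.mp hx]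
    have hx2 : 0 < x - q₂ := by linarith [Set.mem_Ioi.mp hx]
    have hx3 : 0 < x - q₃ := by linarith [Set.mem_Ioi.mp hx]
    nlinarith [mul_pos hΛ (mul_pos hx1 (mul_pos hx2 hx3))]
  -- values at key points
  have hq2sq : 0 < Q ^ 2 := by positivity
  have hf0 : 0 < f 0 := by simp only [hf]; norm_num; positivity
  have hfq2 : f q₂ < 0 := by simp only [hf]; linarith
  have hfq3 : 0 < f q₃ := by simp only [hf]; linarith
  -- big T with f T < 0
  obtain ⟨T, hTq, hT1, hT2⟩ : ∃ T : ℝ, q₃ < T ∧ (1 : ℝ) ≤ T ∧ 4 + 3 * Q ^ 2 ≤ Λ * T := by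
    refine ⟨max (q₃ + 1) ((4 + 3 * Q ^ 2) / Λ), ?_, ?_, ?_⟩
    · exact lt_of_lt_of_le (by linarith) (le_max_left _ _)
    · exact le_trans (by linarith) (le_max_left _ _)
    · have h := le_max_right (q₃ + 1) ((4 + 3 * Q ^ 2) / Λ)
      rw [div_le_iff₀ hΛ] at h
      linarith
  have hT0 : (0 : ℝ) < T := by linarith
  have hfT : f T < 0 := by
    simp only [hf]
    have hmul : (4 + 3 * Q ^ 2) * T ^ 3 ≤ Λ * T * T ^ 3 :=
      mul_le_mul_of_nonneg_right hT2 (by positivity)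
    have e1 : (4 + 3 * Q ^ 2) * T ^ 3 ≤ Λ * T ^ 4 := by
      calc (4 + 3 * Q ^ 2) * T ^ 3 ≤ Λ * T * T ^ 3 := hmul
        _ = Λ * T ^ 4 := by ring
    have e2 : T ^ 2 ≤ T ^ 3 := pow_le_pow_right₀ hT1 (by norm_num)
    have e4 : (1 : ℝ) ≤ T ^ 3 := by
      calc (1 : ℝ) = 1 ^ 3 := by norm_num
        _ ≤ T ^ 3 := pow_le_pow_left₀ (by norm_num) hT1 3
    have e5 : 0 ≤ Q ^ 2 * (T ^ 3 - 1) := mul_nonneg (sq_nonneg Q) (by linarith)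
    have e6 : 0 < M * T := mul_pos hM hT0
    linarith [e1, e2, e4, e5, e6]
  -- roots via IVT
  obtain ⟨a, haI, hfa⟩ := intermediate_value_Ioo' (le_of_lt h2) hfc.continuousOn
    (Set.mem_Ioo.mpr ⟨hfq2, hf0⟩)
  obtain ⟨b, hbI, hfb⟩ := intermediate_value_Ioo (le_of_lt h23) hfc.continuousOn
    (Set.mem_Ioo.mpr ⟨hfq2, hfq3⟩)
  obtain ⟨c, hcI, hfc0⟩ := intermediate_value_Ioo' (le_of_lt hTq) hfc.continuousOn
    (Set.mem_Ioo.mpr ⟨hfT, hfq3⟩)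
  refine ⟨a, b, c, haI.1, lt_trans haI.2 hbI.1, lt_trans hbI.2 hcI.1, ?_⟩
  intro q hq
  constructor
  · intro hroot
    have hroot' : f q = 0 := hroot
    rcases lt_trichotomy q q₂ with hlt | heq | hgt
    · left
      have hqm : q ∈ Set.Icc 0 q₂ := ⟨le_of_lt hq, le_of_lt hlt⟩
      have ham : a ∈ Set.Icc 0 q₂ := ⟨le_of_lt haI.1, le_of_lt haI.2⟩
      exact hanti1.injOn hqm ham (by rw [hroot', hfa])
    · exfalso; rw [heq] at hroot'; rw [hroot'] at hfq2; exact lt_irrefl 0 hfq2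
    · rcases lt_trichotomy q q₃ with hlt3 | heq3 | hgt3
      · right; left
        have hqm : q ∈ Set.Icc q₂ q₃ := ⟨le_of_lt hgt, le_of_lt hlt3⟩
        have hbm : b ∈ Set.Icc q₂ q₃ := ⟨le_of_lt hbI.1, le_of_lt hbI.2⟩
        exact hmono.injOn hqm hbm (by rw [hroot', hfb])
      · exfalso; rw [heq3] at hroot'; rw [hroot'] at hfq3; exact lt_irrefl 0 hfq3
      · right; right
        have hqm : q ∈ Set.Ici q₃ := le_of_lt hgt3
        have hcm : c ∈ Set.Ici q₃ := le_of_lt hcI.1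
        exact hanti2.injOn hqm hcm (by rw [hroot', hfc0])
  · rintro (rfl | rfl | rfl)
    · exact hfa
    · exact hfb
    · exact hfc0
end

section
/- Let Λ > 0, M > 0 with Υ := -1/(8Λ³) + 9M²/(16Λ²) = 0, and let q₂ > 0 be the double critical point of φ(q) = -Λq⁴ + 3q² - 6Mq. If 3Q² = -φ(q₂), then q₂ is a root of φ(q) + 3Q² of multiplicity exactly three. -/
/-- Triple horizon: for `Λ > 0`, `M > 0` with `Υ = 0` and `q₂ > 0` the double
critical point of `φ(q) = -Λq⁴ + 3q² - 6Mq` (so `φ'(q₂) = 0` and `φ''(q₂) = 0`),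
if `3Q² = -φ(q₂)` then `q₂` is a root of `φ + 3Q²` of multiplicity exactly three. -/
theorem triple_horizon (Λ M Q q₂ : ℝ) (hΛ : 0 < Λ) (hM : 0 < M)
    (hΥ : -1 / (8 * Λ ^ 3) + 9 * M ^ 2 / (16 * Λ ^ 2) = 0)
    (h2 : 0 < q₂)
    (hc : -4 * Λ * q₂ ^ 3 + 6 * q₂ - 6 * M = 0)
    (hcc : -12 * Λ * q₂ ^ 2 + 6 = 0)
    (hQ : 3 * Q ^ 2 = -(-Λ * q₂ ^ 4 + 3 * q₂ ^ 2 - 6 * M * q₂)) :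
    ∃ c : ℝ, c ≠ q₂ ∧
      ∀ q : ℝ, (-Λ * q ^ 4 + 3 * q ^ 2 - 6 * M * q) + 3 * Q ^ 2 =
        -Λ * (q - q₂) ^ 3 * (q - c) := by
  refine ⟨-3 * q₂, by nlinarith, fun q => ?_⟩
  linear_combination hQ + (q - q₂) * hc + (q ^ 2 / 2 - q₂ * q + q₂ ^ 2 / 2) * hcc
end

section
/- Let q : I → (0,∞) be a C² function on a real interval with q' > 0 everywhere, and suppose (q²)'' = 2(K - Λq² - Q²/q²)·q' for constants K, Λ, Q. Then there exists a constant M such that q' = K - 2M/q + Q²/q² - Λq²/3 on I. -/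
/-- First integral of the static Einstein equation: if `q > 0` is `C²` on an open
interval with `q' > 0` and `(q²)'' = 2(K - Λq² - Q²/q²)·q'`, then there is a
constant `M` with `q' = K - 2M/q + Q²/q² - Λq²/3`. -/
theorem first_integral_static (a b K Λ Q : ℝ) (q qd qdd : ℝ → ℝ)
    (hq : ∀ x ∈ Set.Ioo a b, HasDerivAt q (qd x) x)
    (hqd : ∀ x ∈ Set.Ioo a b, HasDerivAt qd (qdd x) x)
    (hpos : ∀ x ∈ Set.Ioo a b, 0 < q x)
    (hd : ∀ x ∈ Set.Ioo a b, 0 < qd x)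
    (heq : ∀ x ∈ Set.Ioo a b,
      2 * ((qd x) ^ 2 + q x * qdd x) =
        2 * (K - Λ * (q x) ^ 2 - Q ^ 2 / (q x) ^ 2) * qd x) :
    ∃ M : ℝ, ∀ x ∈ Set.Ioo a b,
      qd x = K - 2 * M / q x + Q ^ 2 / (q x) ^ 2 - Λ * (q x) ^ 2 / 3 := by
  rcases Set.eq_empty_or_nonempty (Set.Ioo a b) with he | ⟨x₀, hx₀⟩
  · exact ⟨0, fun x hx => absurd hx (he ▸ id)⟩
  set g : ℝ → ℝ := fun x => q x * qd x - K * q x - Q ^ 2 / q x + Λ * (q x) ^ 3 / 3 with hg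
  have hg' : ∀ x ∈ Set.Ioo a b, HasDerivAt g 0 x := by
    intro x hx
    have hqne : q x ≠ 0 := (hpos x hx).ne'
    have h1 : HasDerivAt g
        (qd x * qd x + q x * qdd x - K * qd x - (0 * q x ^ 2 - Q ^ 2 * qd x) / (q x) ^ 2
          + Λ * (3 * q x ^ 2 * qd x) / 3) x := by
      exact ((((hq x hx).mul (hqd x hx)).sub ((hq x hx).const_mul K)).sub
        (((hasDerivAt_const x (Q ^ 2)).div (hq x hx) hqne))).add
        ((((hq x hx).pow 3).const_mul Λ).div_const 3) |>.congr_deriv (by ring_nf)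
    convert h1 using 1
    have key := heq x hx
    have hq2 : (q x) ^ 2 ≠ 0 := pow_ne_zero 2 hqne
    field_simp at key ⊢
    nlinarith [key]
  have hconst : ∀ x ∈ Set.Ioo a b, g x = g x₀ := by
    intro x hx
    have := Convex.norm_image_sub_le_of_norm_hasDerivWithin_le (C := 0) (f := g)
      (f' := fun _ => 0) (fun y hy => (hg' y hy).hasDerivWithinAt)
      (fun y _ => by simp) (convex_Ioo a b) hx₀ hx
    simpa [sub_eq_zero] using this
  obtain ⟨c, hc⟩ : ∃ c, c = g x₀ := ⟨_, rfl⟩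
  refine ⟨-c / 2, fun x hx => ?_⟩
  have hqne : q x ≠ 0 := (hpos x hx).ne'
  have h : q x * qd x - K * q x - Q ^ 2 / q x + Λ * (q x) ^ 3 / 3 = c := hc ▸ hconst x hx
  field_simp at h ⊢
  linear_combination h
end

section
/- Let Λ > 0, M < 0, Q ≠ 0, and let q₁ denote the unique critical point of φ(q) = -Λq⁴ + 3q² - 6Mq on (0,∞) (which exists and satisfies φ(q₁) > 0). Then the equation φ(q) - 3Q² = 0 has exactly two positive simple roots if 0 < 3Q² < φ(q₁), exactly one positive double root if 3Q² = φ(q₁), and no positive roots if 3Q² > φ(q₁). -/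
open Set

/-- Horizon structure for `Λ > 0`, `M < 0` (signature `(-+++)`): with `q₁` the unique
positive critical point of `φ(q) = -Λq⁴ + 3q² - 6Mq`, one has `φ(q₁) > 0`, and
`φ(q) - 3Q² = 0` has two positive simple roots, one positive double root, or no
positive roots according as `3Q²` is less than, equal to, or greater than `φ(q₁)`. -/
theorem positive_lambda_negative_mass_horizons (Λ M Q q₁ : ℝ)
    (hΛ : 0 < Λ) (hM : M < 0) (hQ : Q ≠ 0) (h1 : 0 < q₁)
    (hc : -4 * Λ * q₁ ^ 3 + 6 * q₁ - 6 * M = 0)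
    (huniq : ∀ q : ℝ, 0 < q → -4 * Λ * q ^ 3 + 6 * q - 6 * M = 0 → q = q₁) :
    0 < -Λ * q₁ ^ 4 + 3 * q₁ ^ 2 - 6 * M * q₁ ∧
    (3 * Q ^ 2 < -Λ * q₁ ^ 4 + 3 * q₁ ^ 2 - 6 * M * q₁ →
      ∃ a b : ℝ, 0 < a ∧ a < b ∧
        (∀ q : ℝ, 0 < q →
          ((-Λ * q ^ 4 + 3 * q ^ 2 - 6 * M * q) - 3 * Q ^ 2 = 0 ↔ q = a ∨ q = b)) ∧
        -4 * Λ * a ^ 3 + 6 * a - 6 * M ≠ 0 ∧ -4 * Λ * b ^ 3 + 6 * b - 6 * M ≠ 0) ∧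
    (3 * Q ^ 2 = -Λ * q₁ ^ 4 + 3 * q₁ ^ 2 - 6 * M * q₁ →
      (∀ q : ℝ, 0 < q →
        ((-Λ * q ^ 4 + 3 * q ^ 2 - 6 * M * q) - 3 * Q ^ 2 = 0 ↔ q = q₁)) ∧
      -12 * Λ * q₁ ^ 2 + 6 ≠ 0) ∧
    (3 * Q ^ 2 > -Λ * q₁ ^ 4 + 3 * q₁ ^ 2 - 6 * M * q₁ →
      ∀ q : ℝ, 0 < q → (-Λ * q ^ 4 + 3 * q ^ 2 - 6 * M * q) - 3 * Q ^ 2 ≠ 0) := by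
  set f : ℝ → ℝ := fun q => -Λ * q ^ 4 + 3 * q ^ 2 - 6 * M * q with hfdef
  set g : ℝ → ℝ := fun q => -4 * Λ * q ^ 3 + 6 * q - 6 * M with hgdef
  have hderiv : ∀ x : ℝ, HasDerivAt f (g x) x := by
    intro x
    have h := (((hasDerivAt_pow 4 x).const_mul (-Λ)).add
      ((hasDerivAt_pow 2 x).const_mul 3)).sub ((hasDerivAt_id x).const_mul (6 * M))
    have h' : HasDerivAt f _ x := h
    convert h' using 1
    show -4 * Λ * x ^ 3 + 6 * x - 6 * M = _
    push_cast
    ring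
  have hfc : Continuous f := by rw [hfdef]; fun_prop
  have hgcont : Continuous g := by rw [hgdef]; fun_prop
  have hg0 : 0 < g 0 := by simp [hgdef]; linarith
  have hgpos : ∀ x, 0 < x → x < q₁ → 0 < g x := by
    intro x hx hxq
    rcases lt_trichotomy (g x) 0 with h | h | h
    · exfalso
      obtain ⟨c, hcmem, hceq⟩ := intermediate_value_Ioo' (le_of_lt hx) hgcont.continuousOn
        (show (0:ℝ) ∈ Ioo (g x) (g 0) from ⟨h, hg0⟩)
      have := huniq c hcmem.1 hceq
      linarith [hcmem.2]
    · exact absurd (huniq x hx h) (by linarith)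
    · exact h
  have hgneg : ∀ x, q₁ < x → g x < 0 := by
    intro x hx
    obtain ⟨R, hxR, hgR⟩ : ∃ R, x < R ∧ g R < 0 := by
      refine ⟨max (x + 1) (max 1 ((7 - 6 * M) / (4 * Λ))),
        lt_of_lt_of_le (by linarith) (le_max_left _ _), ?_⟩
      set R := max (x + 1) (max 1 ((7 - 6 * M) / (4 * Λ))) with hRdef
      have hR1 : (1:ℝ) ≤ R := le_trans (le_max_left _ _) (le_max_right _ _)
      have hR2 : (7 - 6 * M) / (4 * Λ) ≤ R := le_trans (le_max_right _ _) (le_max_right _ _)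
      have hR2' : 7 - 6 * M ≤ 4 * Λ * R := by
        rw [div_le_iff₀ (by linarith)] at hR2; linarith
      show -4 * Λ * R ^ 3 + 6 * R - 6 * M < 0
      nlinarith [mul_le_mul_of_nonneg_right hR2' (sq_nonneg R),
        mul_nonneg (by linarith : (0:ℝ) ≤ R - 1) (by linarith : (0:ℝ) ≤ R), hM]
    rcases lt_trichotomy (g x) 0 with h | h | h
    · exact h
    · exact absurd (huniq x (lt_trans h1 hx) h) (by linarith)
    · exfalso
      obtain ⟨c, hcmem, hceq⟩ := intermediate_value_Ioo' (le_of_lt hxR) hgcont.continuousOn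
        (show (0:ℝ) ∈ Ioo (g R) (g x) from ⟨hgR, h⟩)
      have := huniq c (by linarith [hcmem.1, h1] : 0 < c) hceq
      linarith [hcmem.1]
  have hmono : StrictMonoOn f (Icc 0 q₁) := by
    apply strictMonoOn_of_deriv_pos (convex_Icc 0 q₁) hfc.continuousOn
    intro x hx
    rw [interior_Icc] at hx
    rw [(hderiv x).deriv]
    exact hgpos x hx.1 hx.2
  have hanti : StrictAntiOn f (Ici q₁) := by
    apply strictAntiOn_of_deriv_neg (convex_Ici q₁) hfc.continuousOn
    intro x hx
    rw [interior_Ici] at hx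
    rw [(hderiv x).deriv]
    exact hgneg x hx
  have hf0 : f 0 = 0 := by simp [hfdef]
  have hfq1pos : 0 < f q₁ := by
    have h := hmono ⟨le_refl 0, le_of_lt h1⟩ ⟨le_of_lt h1, le_refl q₁⟩ h1
    rw [hf0] at h; exact h
  have hmax : ∀ q, 0 < q → q ≠ q₁ → f q < f q₁ := by
    intro q hq hne
    rcases lt_or_gt_of_ne hne with h | h
    · exact hmono ⟨le_of_lt hq, le_of_lt h⟩ ⟨le_of_lt h1, le_refl _⟩ h
    · exact hanti (le_refl q₁) (le_of_lt h) h
  refine ⟨hfq1pos, ?_, ?_, ?_⟩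
  · intro hlt
    have hlt' : 3 * Q ^ 2 < f q₁ := hlt
    have hQ2 : 0 < 3 * Q ^ 2 := by positivity
    obtain ⟨a, ha, hfa⟩ := intermediate_value_Ioo (le_of_lt h1) hfc.continuousOn
      (show 3 * Q ^ 2 ∈ Ioo (f 0) (f q₁) from by rw [hf0]; exact ⟨hQ2, hlt'⟩)
    obtain ⟨R, hq1R, hfR⟩ : ∃ R, q₁ < R ∧ f R < 3 * Q ^ 2 := by
      refine ⟨max (q₁ + 1) (max 1 ((3 - 6 * M + 3 * Q ^ 2 + 1) / Λ)),
        lt_of_lt_of_le (by linarith) (le_max_left _ _), ?_⟩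
      set R := max (q₁ + 1) (max 1 ((3 - 6 * M + 3 * Q ^ 2 + 1) / Λ)) with hRdef
      have hR1 : (1:ℝ) ≤ R := le_trans (le_max_left _ _) (le_max_right _ _)
      have hR2 : (3 - 6 * M + 3 * Q ^ 2 + 1) / Λ ≤ R :=
        le_trans (le_max_right _ _) (le_max_right _ _)
      have hR2' : 3 - 6 * M + 3 * Q ^ 2 + 1 ≤ Λ * R := by
        rw [div_le_iff₀ hΛ] at hR2; linarith
      have hR0 : (0:ℝ) ≤ R := by linarith
      show -Λ * R ^ 4 + 3 * R ^ 2 - 6 * M * R < 3 * Q ^ 2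
      have h23 : R ^ 2 ≤ R ^ 3 := by nlinarith
      have h12 : R ≤ R ^ 2 := by nlinarith
      have hKR : (3 - 6 * M + 3 * Q ^ 2 + 1) * R ^ 3 ≤ Λ * R ^ 4 := by
        nlinarith [mul_le_mul_of_nonneg_right hR2' (pow_nonneg hR0 3)]
      have hK0 : (0:ℝ) < 3 - 6 * M + 3 * Q ^ 2 + 1 := by nlinarith [sq_nonneg Q]
      have hKR2 : (3 - 6 * M + 3 * Q ^ 2 + 1) * R ^ 2 ≤ (3 - 6 * M + 3 * Q ^ 2 + 1) * R ^ 3 :=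
        mul_le_mul_of_nonneg_left h23 (le_of_lt hK0)
      nlinarith [mul_le_mul_of_nonneg_left h12 (by linarith : (0:ℝ) ≤ -6 * M),
        mul_le_mul_of_nonneg_left (by nlinarith : (1:ℝ) ≤ R ^ 2) (by positivity : (0:ℝ) ≤ 3 * Q ^ 2)]
    obtain ⟨b, hb, hfb⟩ := intermediate_value_Ioo' (le_of_lt hq1R) hfc.continuousOn
      (show 3 * Q ^ 2 ∈ Ioo (f R) (f q₁) from ⟨hfR, hlt'⟩)
    refine ⟨a, b, ha.1, lt_trans ha.2 hb.1, ?_, ?_, ?_⟩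
    · intro q hq
      constructor
      · intro heq
        have hfq : f q = 3 * Q ^ 2 := by
          have heq' : f q - 3 * Q ^ 2 = 0 := heq
          linarith
        rcases lt_trichotomy q q₁ with h | h | h
        · left
          exact hmono.injOn ⟨le_of_lt hq, le_of_lt h⟩ ⟨le_of_lt ha.1, le_of_lt ha.2⟩
            (hfq.trans hfa.symm)
        · exfalso; rw [h] at hfq; linarith
        · right
          exact hanti.injOn (le_of_lt h) (le_of_lt hb.1) (hfq.trans hfb.symm)
      · rintro (rfl | rfl)
        · show f q - 3 * Q ^ 2 = 0; rw [hfa]; ring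
        · show f q - 3 * Q ^ 2 = 0; rw [hfb]; ring
    · intro h
      have := huniq a ha.1 h
      linarith [ha.2]
    · intro h
      have := huniq b (lt_trans h1 hb.1) h
      linarith [hb.1]
  · intro heq
    have heq' : 3 * Q ^ 2 = f q₁ := heq
    constructor
    · intro q hq
      constructor
      · intro hz
        by_contra hne
        have h := hmax q hq hne
        have hz' : f q - 3 * Q ^ 2 = 0 := hz
        linarith
      · rintro rfl
        show f q - 3 * Q ^ 2 = 0
        linarith
    · have h : -12 * Λ * q₁ ^ 2 + 6 < 0 := by
        nlinarith [hc, mul_pos h1 h1, mul_pos hΛ (mul_pos h1 h1)]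
      exact ne_of_lt h
  · intro hgt q hq hz
    have hgt' : f q₁ < 3 * Q ^ 2 := hgt
    have hz' : f q - 3 * Q ^ 2 = 0 := hz
    rcases eq_or_ne q q₁ with rfl | hne
    · linarith
    · have := hmax q hq hne
      linarith
end
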